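/- Every O-[cf(λ), cf(λ)]-compact topological space is O-[λ,λ]-compact, where cf(λ) denotes the cofinality of the infinite cardinal λ. -/

import Mathlib

open Cardinal Set

def OCompact (X : Type*) [TopologicalSpace X] (μ lam : Cardinal) : Prop :=
  ∀ C : lam.out → Set X, (∀ α, IsClosed (C α)) →
    (∀ Z : Set lam.out, #Z < μ →
      ∃ O : Set X, IsOpen O ∧ O.Nonempty ∧ O ⊆ ⋂ α ∈ Z, C α) →
    (⋂ α, C α).Nonempty

theorem stmt18 (X : Type*) [TopologicalSpace X] (lam : Cardinal)
    (hlam : ℵ₀ ≤ lam)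
    (h : OCompact X lam.ord.cof lam.ord.cof) :
    OCompact X lam lam := by
  intro C hC hOpen
  -- identify lam.out with lam.ord.ToType
  have hcard : #(lam.ord.ToType) = #(lam.out) := by
    rw [Cardinal.mk_toType, Cardinal.card_ord, Cardinal.mk_out]
  obtain ⟨e⟩ : Nonempty (lam.out ≃ lam.ord.ToType) := by
    rw [← Cardinal.eq]; exact hcard.symm
  -- a cofinal subset S of lam.ord.ToType of size cof
  obtain ⟨S, hS, hScard⟩ := Order.exists_cof_eq lam.ord.ToType
  rw [Ordinal.cof_toType] at hScard
  obtain ⟨g⟩ : Nonempty (lam.ord.cof.out ≃ S) := by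
    rw [← Cardinal.eq, Cardinal.mk_out]; exact hScard.symm
  -- the family of initial segments
  set Z : lam.ord.cof.out → Set lam.out := fun β => {x | e x ≤ (g β : lam.ord.ToType)} with hZ
  have hZcard : ∀ β, #(Z β) < lam := by
    intro β
    have h1 : #(Z β) ≤ #(Iic (g β : lam.ord.ToType)) := by
      refine Cardinal.mk_le_of_injective (f := fun x : Z β => (⟨e x, x.2⟩ : Iic _)) ?_
      intro a b hab
      apply Subtype.ext
      exact e.injective (congrArg Subtype.val hab)
    have h2 : Iic (g β : lam.ord.ToType) = insert (g β : lam.ord.ToType) (Iio (g β : lam.ord.ToType)) := by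
      ext x; simp [le_iff_lt_or_eq, or_comm]
    have h3 : #(Iic (g β : lam.ord.ToType)) ≤ #(Iio (g β : lam.ord.ToType)) + 1 := by
      rw [h2]; exact Cardinal.mk_insert_le
    have h4 : #(Iio (g β : lam.ord.ToType)) < lam := Cardinal.mk_Iio_ord_toType _
    exact h1.trans_lt (h3.trans_lt (Cardinal.add_lt_of_lt hlam h4
      (Cardinal.one_lt_aleph0.trans_le hlam)))
  -- unions of fewer than cof many Z β are small
  have hunion : ∀ W : Set lam.ord.cof.out, #W < lam.ord.cof → #(⋃ β ∈ W, Z β) < lam := by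
    intro W hW
    have hb : #(⋃ β ∈ W, Z β) ≤ #W * ⨆ β : W, #(Z β) := Cardinal.mk_biUnion_le Z W
    refine hb.trans_lt (Cardinal.mul_lt_of_lt hlam (hW.trans_le (Ordinal.cof_ord_le lam)) ?_)
    exact Ordinal.iSup_lt hW fun β => hZcard β
  -- the Z β cover everything
  have hcover : ∀ x : lam.out, ∃ β, x ∈ Z β := by
    intro x
    obtain ⟨b, hbS, hb⟩ := hS (e x)
    exact ⟨g.symm ⟨b, hbS⟩, by simpa [hZ, not_lt] using hb⟩
  -- apply cof-compactness to the family of partial intersections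
  set D : lam.ord.cof.out → Set X := fun β => ⋂ α ∈ Z β, C α with hD
  have hDclosed : ∀ β, IsClosed (D β) := fun β => isClosed_biInter fun α _ => hC α
  have hDopen : ∀ W : Set lam.ord.cof.out, #W < lam.ord.cof →
      ∃ O : Set X, IsOpen O ∧ O.Nonempty ∧ O ⊆ ⋂ β ∈ W, D β := by
    intro W hW
    obtain ⟨O, hO1, hO2, hO3⟩ := hOpen (⋃ β ∈ W, Z β) (hunion W hW)
    refine ⟨O, hO1, hO2, ?_⟩
    intro x hx
    refine mem_iInter₂.2 fun β hβ => mem_iInter₂.2 fun α hα => ?_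
    exact mem_iInter₂.1 (hO3 hx) α (mem_biUnion hβ hα)
  obtain ⟨x, hx⟩ := h D hDclosed hDopen
  rw [mem_iInter] at hx
  refine ⟨x, mem_iInter.2 fun α => ?_⟩
  obtain ⟨β, hβ⟩ := hcover α
  exact mem_iInter₂.1 (hx β) α hβ
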